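/- The 4×4 integer matrix M = [[1,2,2,2],[0,2,1,0],[1,2,1,1],[1,1,1,1]] has characteristic polynomial with roots exactly τ³, τ, σ, σ³, where τ = (1+√5)/2 and σ = (1−√5)/2. -/

import Mathlib

set_option maxHeartbeats 1000000 in
theorem inflation_matrix_eigenvalues
    (τ σ : ℝ) (hτ : τ = (1 + Real.sqrt 5) / 2) (hσ : σ = (1 - Real.sqrt 5) / 2)
    (M : Matrix (Fin 4) (Fin 4) ℝ)
    (hM : M = !![1,2,2,2; 0,2,1,0; 1,2,1,1; 1,1,1,1]) :
    ∀ x : ℝ, M.charpoly.IsRoot x ↔ (x = τ ^ 3 ∨ x = τ ∨ x = σ ∨ x = σ ^ 3) := by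
  have hs : Real.sqrt 5 ^ 2 = 5 := Real.sq_sqrt (by norm_num)
  have hsum : τ + σ = 1 := by rw [hτ, hσ]; ring
  have hprod : τ * σ = -1 := by
    rw [hτ, hσ]; linear_combination (-1/4 : ℝ) * hs
  have h3sum : τ ^ 3 + σ ^ 3 = 4 := by
    linear_combination ((τ + σ)^2 + (τ + σ) + 4) * hsum - 3 * (τ + σ) * hprod
  have h3prod : τ ^ 3 * σ ^ 3 = -1 := by
    linear_combination ((τ * σ)^2 - τ * σ + 1) * hprod
  have f1 : ∀ x : ℝ, (x - τ) * (x - σ) = x^2 - x - 1 := fun x => by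
    linear_combination (-x) * hsum + hprod
  have f2 : ∀ x : ℝ, (x - τ^3) * (x - σ^3) = x^2 - 4*x - 1 := fun x => by
    linear_combination (-x) * h3sum + h3prod
  have hkey : ∀ x : ℝ, M.charpoly.eval x = x^4 - 5*x^3 + 2*x^2 + 5*x + 1 := by
    intro x
    have hmap : (Matrix.charmatrix M).map (Polynomial.eval x) =
        !![x-1,-2,-2,-2; 0,x-2,-1,0; -1,-2,x-1,-1; -1,-1,-1,x-1] := by
      subst hM
      ext i j
      fin_cases i <;> fin_cases j <;>
        simp [Matrix.charmatrix_apply, Matrix.diagonal, Matrix.vecHead, Matrix.vecTail]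
    have h2 : M.charpoly.eval x = ((Matrix.charmatrix M).map (Polynomial.eval x)).det := by
      simp only [Matrix.charpoly, ← Polynomial.coe_evalRingHom, RingHom.map_det]
      rfl
    rw [h2, hmap]
    rw [Matrix.det_succ_row_zero]
    simp [Fin.sum_univ_succ, Matrix.det_fin_three, Fin.succAbove]
    ring
  intro x
  have hfact : M.charpoly.eval x = ((x - τ^3) * (x - σ^3)) * ((x - τ) * (x - σ)) := by
    rw [hkey x, f1 x, f2 x]; ring
  rw [Polynomial.IsRoot, hfact]
  simp only [mul_eq_zero, sub_eq_zero]
  tauto
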